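/- arXiv:1302.5413 — 5 statements merged into one kernel-verified Lean document; each statement's English description precedes it below -/
import Mathlib

section
/- Let τ be a pseudometric on a set V and let γ : x ⇝ v and γ' : y ⇝ v' be paths with total weights τ(γ) ≤ τ(x,v) + ε and τ(γ') ≤ τ(y,v') + ε, where weights of paths are sums of nonnegative edge weights. If γ and γ' share a common vertex w, then τ(x,v') + τ(y,v) ≤ τ(x,v) + τ(y,v') + 2ε. In particular, if ε-optimal paths cross for all ε > 0, then τ(x,v') + τ(y,v) ≤ τ(x,v) + τ(y,v'). -/
/-! Paths crossing inequality: if `ε`-optimal paths `γ : x ⇝ v` and `γ' : y ⇝ v'`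
share a common vertex, then `τ(x,v') + τ(y,v) ≤ τ(x,v) + τ(y,v') + 2ε`. -/

variable {V : Type*}

/-- The weight of a path (a list of vertices), as the sum of the edge weights of
consecutive pairs. -/
def pathWeight (w : V → V → ℝ) (l : List V) : ℝ :=
  ((l.zip l.tail).map fun p => w p.1 p.2).sum

/-- The passage time between two vertices: the infimum of weights of paths from
`x` to `y`. -/
noncomputable def passageTime (w : V → V → ℝ) (x y : V) : ℝ :=
  sInf {t : ℝ | ∃ l : List V, l.head? = some x ∧ l.getLast? = some y ∧ pathWeight w l = t}

lemma pathWeight_cons_cons (w : V → V → ℝ) (a b : V) (l : List V) :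
    pathWeight w (a :: b :: l) = w a b + pathWeight w (b :: l) := by
  simp [pathWeight]

lemma pathWeight_split (w : V → V → ℝ) (m : V) (l₂ : List V) :
    ∀ l₁ : List V, pathWeight w (l₁ ++ m :: l₂) =
      pathWeight w (l₁ ++ [m]) + pathWeight w (m :: l₂)
  | [] => by simp [pathWeight]
  | [a] => by simp [pathWeight_cons_cons, pathWeight]
  | a :: b :: l₁ => by
    have := pathWeight_split w m l₂ (b :: l₁)
    simp only [List.cons_append, pathWeight_cons_cons] at this ⊢
    rw [this]; ring

lemma pathWeight_nonneg (w : V → V → ℝ) (hw : ∀ a b, 0 ≤ w a b) (l : List V) :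
    0 ≤ pathWeight w l := by
  apply List.sum_nonneg
  intro t ht
  obtain ⟨p, _, rfl⟩ := List.mem_map.1 ht
  exact hw _ _

lemma passageTime_le (w : V → V → ℝ) (hw : ∀ a b, 0 ≤ w a b) {x y : V} {l : List V}
    (h1 : l.head? = some x) (h2 : l.getLast? = some y) :
    passageTime w x y ≤ pathWeight w l := by
  apply csInf_le
  · exact ⟨0, fun t ⟨l', _, _, hl'⟩ => hl' ▸ pathWeight_nonneg w hw l'⟩
  · exact ⟨l, h1, h2, rfl⟩

lemma head?_append_cons (s : List V) (a : V) (t t' : List V) :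
    (s ++ a :: t).head? = (s ++ a :: t').head? := by
  cases s <;> simp

theorem crossing_paths_inequality (w : V → V → ℝ) (hw : ∀ a b, 0 ≤ w a b)
    (x y v v' : V) (ε : ℝ) (hε : 0 ≤ ε) (γ γ' : List V) (wpt : V)
    (hγx : γ.head? = some x) (hγv : γ.getLast? = some v)
    (hγ'y : γ'.head? = some y) (hγ'v' : γ'.getLast? = some v')
    (hγopt : pathWeight w γ ≤ passageTime w x v + ε)
    (hγ'opt : pathWeight w γ' ≤ passageTime w y v' + ε)
    (hcross : wpt ∈ γ ∧ wpt ∈ γ') :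
    passageTime w x v' + passageTime w y v ≤
      passageTime w x v + passageTime w y v' + 2 * ε := by
  obtain ⟨h1, h2⟩ := hcross
  obtain ⟨l₁, l₂, rfl⟩ := List.append_of_mem h1
  obtain ⟨l₁', l₂', rfl⟩ := List.append_of_mem h2
  have hA : passageTime w x v' ≤ pathWeight w (l₁ ++ wpt :: l₂') := by
    apply passageTime_le w hw
    · rw [head?_append_cons l₁ wpt l₂' l₂]; exact hγx
    · rw [List.getLast?_append_cons]
      rwa [List.getLast?_append_cons] at hγ'v'
  have hB : passageTime w y v ≤ pathWeight w (l₁' ++ wpt :: l₂) := by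
    apply passageTime_le w hw
    · rw [head?_append_cons l₁' wpt l₂ l₂']; exact hγ'y
    · rw [List.getLast?_append_cons]
      rwa [List.getLast?_append_cons] at hγv
  have e1 := pathWeight_split w wpt l₂ l₁
  have e2 := pathWeight_split w wpt l₂' l₁'
  have e3 := pathWeight_split w wpt l₂' l₁
  have e4 := pathWeight_split w wpt l₂ l₁'
  linarith
end

section
/- Let V₁ ⊆ ℤ² be infinite and connected (in the nearest-neighbor lattice graph) such that the complement V₁ᶜ is also infinite and connected. Let F = {{x,y} : x ∈ V₁, y ∈ V₁ᶜ, ‖x−y‖₁ = 1} be the edge boundary and let F* be the set of dual edges (edges of ℤ² + (1/2,1/2) bisecting edges of F), with W* the set of endpoints of edges in F*. Then in the graph G* = (W*, F*), every vertex has degree exactly 2. -/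
/-! The dual edge boundary of an infinite connected subset of `ℤ²` with infinite
connected complement: every vertex of the dual boundary graph has degree exactly 2.

Dual vertices `ℤ² + (1/2,1/2)` are identified with `ℤ²` (the dual vertex `v*`
corresponds to `v` with `v* = v + (1/2,1/2)`). Under this identification, the
dual edge between adjacent dual vertices `u, v` bisects the primal edge
`crossEdge u v` computed below. -/

/-- Nearest-neighbor adjacency in the square lattice `ℤ²`. -/
def latAdj (x y : ℤ × ℤ) : Prop := |x.1 - y.1| + |x.2 - y.2| = 1

/-- A subset `S ⊆ ℤ²` is connected (in the nearest-neighbor lattice graph). -/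
def latConnected (S : Set (ℤ × ℤ)) : Prop :=
  ∀ x ∈ S, ∀ y ∈ S, ∃ l : List (ℤ × ℤ), l.Chain' latAdj ∧ (∀ z ∈ l, z ∈ S) ∧
    l.head? = some x ∧ l.getLast? = some y

/-- Coordinatewise maximum of two lattice points. -/
def pmax (u v : ℤ × ℤ) : ℤ × ℤ := (max u.1 v.1, max u.2 v.2)

/-- The primal edge (as a two-element set of its endpoints) bisected by the dual
edge with endpoints the dual vertices `u` and `v` (for `u, v` adjacent). -/
def crossEdge (u v : ℤ × ℤ) : Set (ℤ × ℤ) :=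
  {pmax u v, pmax u v + (1 - |u.1 - v.1|, 1 - |u.2 - v.2|)}

/-- The edge boundary of `V₁`: primal edges with one endpoint in `V₁` and one in
the complement. -/
def edgeBoundary (V₁ : Set (ℤ × ℤ)) : Set (Set (ℤ × ℤ)) :=
  {e | ∃ x y, e = {x, y} ∧ latAdj x y ∧ x ∈ V₁ ∧ y ∉ V₁}

/-- Adjacency in the dual boundary graph `G* = (W*, F*)`: two adjacent dual
vertices joined by a dual edge bisecting a boundary edge of `V₁`. -/
def dualAdj (V₁ : Set (ℤ × ℤ)) (u v : ℤ × ℤ) : Prop :=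
  latAdj u v ∧ crossEdge u v ∈ edgeBoundary V₁

/-- The vertex set `W*` of the dual boundary graph: endpoints of dual edges in `F*`. -/
def dualVertices (V₁ : Set (ℤ × ℤ)) : Set (ℤ × ℤ) :=
  {u | ∃ v, dualAdj V₁ u v}

/-! ### Auxiliary machinery -/

lemma latAdj_iff (x y : ℤ×ℤ) : latAdj x y ↔
    (x.1 = y.1 ∧ (x.2 = y.2 + 1 ∨ y.2 = x.2 + 1)) ∨
    (x.2 = y.2 ∧ (x.1 = y.1 + 1 ∨ y.1 = x.1 + 1)) := by
  unfold latAdj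
  rcases abs_cases (x.1 - y.1) with ⟨h1,_⟩|⟨h1,_⟩ <;>
    rcases abs_cases (x.2 - y.2) with ⟨h2,_⟩|⟨h2,_⟩ <;> rw [h1, h2] <;> omega

lemma latAdj_symm {x y : ℤ×ℤ} (h : latAdj x y) : latAdj y x := by
  rw [latAdj_iff] at h ⊢; omega

open Classical in
noncomputable def ind (P : Prop) : ZMod 2 := if P then 1 else 0

lemma ind_add_eq (P Q R S : Prop) :
    (ind P + ind Q = ind R + ind S) ↔ ((P ↔ Q) ↔ (R ↔ S)) := by
  unfold ind
  by_cases hP : P <;> by_cases hQ : Q <;> by_cases hR : R <;> by_cases hS : S <;>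
    simp [hP, hQ, hR, hS] <;> decide

noncomputable def fE (z p p' : ℤ×ℤ) : ZMod 2 :=
  ind (p.1 = p'.1 ∧ min p.2 p'.2 = z.2 ∧ z.1 < p.1)
noncomputable def fD (z : ℤ×ℤ) : ZMod 2 := ind (z.2 = 0 ∧ z.1 ≤ 0)
noncomputable def gS (z z' p : ℤ×ℤ) : ZMod 2 :=
  ind (z.1 = z'.1 ∧ p.2 = max z.2 z'.2 ∧ z.1 < p.1)
noncomputable def hB (p : ℤ×ℤ) : ZMod 2 := ind (p.2 = 1 ∧ 1 ≤ p.1)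

lemma L1 (z z' p p' : ℤ×ℤ) (hs : latAdj z z') (he : latAdj p p')
    (h1 : z ≠ p) (h2 : z ≠ p') (h3 : z' ≠ p) (h4 : z' ≠ p') :
    fE z p p' + fE z' p p' = gS z z' p + gS z z' p' := by
  rw [latAdj_iff] at hs he
  obtain ⟨z1, z2⟩ := z; obtain ⟨w1, w2⟩ := z'; obtain ⟨p1, p2⟩ := p; obtain ⟨q1, q2⟩ := p'
  simp only [ne_eq, Prod.mk.injEq, not_and] at h1 h2 h3 h4 hs he
  unfold fE gS
  rw [ind_add_eq]
  dsimp only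
  rcases hs with ⟨h, h'|h'⟩|⟨h, h'|h'⟩ <;> rcases he with ⟨g, g'|g'⟩|⟨g, g'|g'⟩ <;>
    subst h g <;> omega

lemma L2 (z z' : ℤ×ℤ) (hs : latAdj z z') (h1 : z ≠ (0,0)) (h2 : z' ≠ (0,0)) :
    fD z + fD z' = gS z z' (0,0) + gS z z' (1,1) := by
  rw [latAdj_iff] at hs
  obtain ⟨z1, z2⟩ := z; obtain ⟨w1, w2⟩ := z'
  simp only [ne_eq, Prod.mk.injEq, not_and] at h1 h2 hs
  unfold fD gS
  rw [ind_add_eq]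
  dsimp only
  rcases hs with ⟨h, h'|h'⟩|⟨h, h'|h'⟩ <;> subst h <;> omega

lemma L3 (p p' : ℤ×ℤ) (he : latAdj p p')
    (h1 : p ≠ (1,0)) (h2 : p' ≠ (1,0)) (h3 : p ≠ (0,1)) (h4 : p' ≠ (0,1)) :
    fE (1,0) p p' + fE (0,1) p p' = hB p + hB p' := by
  rw [latAdj_iff] at he
  obtain ⟨p1, p2⟩ := p; obtain ⟨q1, q2⟩ := p'
  simp only [ne_eq, Prod.mk.injEq, not_and] at h1 h2 h3 h4 he
  unfold fE hB
  rw [ind_add_eq]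
  dsimp only
  rcases he with ⟨g, g'|g'⟩|⟨g, g'|g'⟩ <;> subst g <;> omega

lemma add_self_z2 (a : ZMod 2) : a + a = 0 := by
  have h2 : (2 : ZMod 2) = 0 := rfl
  linear_combination a * h2

lemma sum_map_add {α : Type*} (l : List α) (f g : α → ZMod 2) :
    (l.map (fun x => f x + g x)).sum = (l.map f).sum + (l.map g).sum := by
  induction l with
  | nil => simp
  | cons a t ih => simp [ih]; ring

lemma sum_swap {α β : Type*} (l1 : List α) (l2 : List β) (f : α → β → ZMod 2) :
    (l1.map (fun a => (l2.map (f a)).sum)).sum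
      = (l2.map (fun b => (l1.map (fun a => f a b)).sum)).sum := by
  induction l1 with
  | nil => simp
  | cons a t ih =>
    simp only [List.map_cons, List.sum_cons, ih, sum_map_add]

lemma tele (F : ℤ×ℤ → ZMod 2) : ∀ (l : List (ℤ×ℤ)) (x y : ℤ×ℤ),
    l.head? = some x → l.getLast? = some y →
    ((l.zip l.tail).map (fun s => F s.1 + F s.2)).sum = F x + F y := by
  intro l
  induction l with
  | nil => intro x y hx hy; simp at hx
  | cons z t ih =>
    intro x y hx hy
    simp only [List.head?_cons, Option.some.injEq] at hx
    subst hx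
    cases t with
    | nil =>
      simp only [List.getLast?_singleton, Option.some.injEq] at hy
      subst hy
      simp [add_self_z2]
    | cons w t' =>
      have hy' : (w :: t').getLast? = some y := by rwa [List.getLast?_cons_cons] at hy
      have ihh := ih w y rfl hy'
      have hzip : (z :: w :: t').zip (z :: w :: t').tail
          = (z,w) :: ((w::t').zip (w::t').tail) := rfl
      rw [hzip]
      simp only [List.map_cons, List.sum_cons]
      rw [ihh]
      linear_combination add_self_z2 (F w)

lemma pairs_mem {l : List (ℤ×ℤ)} {s : (ℤ×ℤ)×(ℤ×ℤ)} (h : s ∈ l.zip l.tail) :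
    s.1 ∈ l ∧ s.2 ∈ l :=
  ⟨(List.of_mem_zip h).1, List.mem_of_mem_tail (List.of_mem_zip h).2⟩

lemma pairs_adj : ∀ {l : List (ℤ×ℤ)}, l.Chain' latAdj → ∀ s ∈ l.zip l.tail, latAdj s.1 s.2
  | [], _, s, hs => by simp at hs
  | [z], _, s, hs => by simp at hs
  | z :: w :: t, h, s, hs => by
    unfold List.Chain' at h; rw [List.isChain_cons_cons] at h
    have hzip : (z :: w :: t).zip (z :: w :: t).tail = (z,w) :: ((w::t).zip (w::t).tail) := rfl
    rw [hzip, List.mem_cons] at hs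
    rcases hs with rfl | hs'
    · exact h.1
    · exact pairs_adj h.2 s hs'

/-- The discrete Jordan-type crossing lemma: a lattice path from `(0,0)` to `(1,1)`
and a lattice path from `(1,0)` to `(0,1)` must share a vertex. -/
lemma no_cross (Pl Ql : List (ℤ×ℤ)) (hPc : Pl.Chain' latAdj) (hQc : Ql.Chain' latAdj)
    (hPh : Pl.head? = some (0,0)) (hPl : Pl.getLast? = some (1,1))
    (hQh : Ql.head? = some (1,0)) (hQl : Ql.getLast? = some (0,1))
    (hdisj : ∀ p ∈ Pl, ∀ q ∈ Ql, p ≠ q) : False := by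
  have haP : ((0,0) : ℤ×ℤ) ∈ Pl := List.mem_of_mem_head? (by rw [hPh]; rfl)
  have hbQ : ((1,0) : ℤ×ℤ) ∈ Ql := List.mem_of_mem_head? (by rw [hQh]; rfl)
  have hdQ : ((0,1) : ℤ×ℤ) ∈ Ql := List.mem_of_mem_getLast? (by rw [hQl]; rfl)
  set SP := Pl.zip Pl.tail with hSP
  set SQ := Ql.zip Ql.tail with hSQ
  have eval1 : (SQ.map (fun s => (SP.map (fun e => fE s.1 e.1 e.2 + fE s.2 e.1 e.2)).sum
      + (fD s.1 + fD s.2))).sum = 0 := by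
    have key : ∀ s ∈ SQ, (SP.map (fun e => fE s.1 e.1 e.2 + fE s.2 e.1 e.2)).sum
        + (fD s.1 + fD s.2) = 0 := by
      intro s hsQ
      have hs1 : s.1 ∈ Ql := (pairs_mem hsQ).1
      have hs2 : s.2 ∈ Ql := (pairs_mem hsQ).2
      have hadj := pairs_adj hQc s hsQ
      have hcongr : SP.map (fun e => fE s.1 e.1 e.2 + fE s.2 e.1 e.2)
          = SP.map (fun e => gS s.1 s.2 e.1 + gS s.1 s.2 e.2) := by
        apply List.map_congr_left
        intro e heP
        exact L1 s.1 s.2 e.1 e.2 hadj (pairs_adj hPc e heP)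
          (Ne.symm (hdisj e.1 (pairs_mem heP).1 s.1 hs1))
          (Ne.symm (hdisj e.2 (pairs_mem heP).2 s.1 hs1))
          (Ne.symm (hdisj e.1 (pairs_mem heP).1 s.2 hs2))
          (Ne.symm (hdisj e.2 (pairs_mem heP).2 s.2 hs2))
      rw [hcongr, tele (gS s.1 s.2) Pl (0,0) (1,1) hPh hPl,
        L2 s.1 s.2 hadj (Ne.symm (hdisj (0,0) haP s.1 hs1)) (Ne.symm (hdisj (0,0) haP s.2 hs2))]
      exact add_self_z2 _
    rw [List.map_congr_left key]
    simp
  have eval2 : (SQ.map (fun s => (SP.map (fun e => fE s.1 e.1 e.2 + fE s.2 e.1 e.2)).sum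
      + (fD s.1 + fD s.2))).sum = 1 := by
    rw [sum_map_add SQ (fun s => (SP.map (fun e => fE s.1 e.1 e.2 + fE s.2 e.1 e.2)).sum)
      (fun s => fD s.1 + fD s.2)]
    have h2 : (SQ.map (fun s => fD s.1 + fD s.2)).sum = fD (1,0) + fD (0,1) :=
      tele fD Ql (1,0) (0,1) hQh hQl
    have h1 : (SQ.map (fun s => (SP.map (fun e => fE s.1 e.1 e.2 + fE s.2 e.1 e.2)).sum)).sum
        = (SP.map (fun e => (SQ.map (fun s => fE s.1 e.1 e.2 + fE s.2 e.1 e.2)).sum)).sum := by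
      have := sum_swap SQ SP (fun s e => fE s.1 e.1 e.2 + fE s.2 e.1 e.2)
      exact this
    rw [h1, h2]
    have hcongr : SP.map (fun e => (SQ.map (fun s => fE s.1 e.1 e.2 + fE s.2 e.1 e.2)).sum)
        = SP.map (fun e => hB e.1 + hB e.2) := by
      apply List.map_congr_left
      intro e heP
      have he1 : e.1 ∈ Pl := (pairs_mem heP).1
      have he2 : e.2 ∈ Pl := (pairs_mem heP).2
      rw [tele (fun z => fE z e.1 e.2) Ql (1,0) (0,1) hQh hQl]
      exact L3 e.1 e.2 (pairs_adj hPc e heP)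
        (hdisj e.1 he1 (1,0) hbQ) (hdisj e.2 he2 (1,0) hbQ)
        (hdisj e.1 he1 (0,1) hdQ) (hdisj e.2 he2 (0,1) hdQ)
    rw [hcongr, tele hB Pl (0,0) (1,1) hPh hPl]
    norm_num [fD, hB, ind]
  rw [eval1] at eval2
  exact absurd eval2 (by decide)

/-- Translated version of `no_cross`. -/
lemma no_cross_u (u1 u2 : ℤ) (Pl Ql : List (ℤ×ℤ)) (hPc : Pl.Chain' latAdj)
    (hQc : Ql.Chain' latAdj)
    (hPh : Pl.head? = some (u1,u2)) (hPl : Pl.getLast? = some (u1+1,u2+1))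
    (hQh : Ql.head? = some (u1+1,u2)) (hQl : Ql.getLast? = some (u1,u2+1))
    (hdisj : ∀ p ∈ Pl, ∀ q ∈ Ql, p ≠ q) : False := by
  set f : ℤ×ℤ → ℤ×ℤ := fun z => (z.1 - u1, z.2 - u2) with hf
  apply no_cross (Pl.map f) (Ql.map f)
  · unfold List.Chain'; rw [List.isChain_map]
    refine List.IsChain.imp ?_ hPc
    intro a b h; rw [latAdj_iff] at h ⊢; simp only [hf]; omega
  · unfold List.Chain'; rw [List.isChain_map]
    refine List.IsChain.imp ?_ hQc
    intro a b h; rw [latAdj_iff] at h ⊢; simp only [hf]; omega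
  · rw [List.head?_map, hPh]; simp only [hf, Option.map_some]
    norm_num [Prod.ext_iff]
  · rw [List.getLast?_map, hPl]; simp only [hf, Option.map_some]
    norm_num [Prod.ext_iff]
  · rw [List.head?_map, hQh]; simp only [hf, Option.map_some]
    norm_num [Prod.ext_iff]
  · rw [List.getLast?_map, hQl]; simp only [hf, Option.map_some]
    norm_num [Prod.ext_iff]
  · intro p hp q hq
    rw [List.mem_map] at hp hq
    obtain ⟨p0, hp0, rfl⟩ := hp
    obtain ⟨q0, hq0, rfl⟩ := hq
    intro h
    apply hdisj p0 hp0 q0 hq0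
    simp only [hf, Prod.mk.injEq] at h
    obtain ⟨p01, p02⟩ := p0; obtain ⟨q01, q02⟩ := q0
    simp only [Prod.mk.injEq]
    dsimp only at h
    omega

lemma crossEdge_right (u1 u2 : ℤ) :
    crossEdge (u1,u2) (u1+1,u2) = {(u1+1,u2), (u1+1,u2+1)} := by
  unfold crossEdge pmax
  have h1 : |u1 - (u1+1)| = 1 := by rw [show u1 - (u1+1) = -1 by ring]; norm_num
  dsimp only
  rw [h1, max_self, show max u1 (u1+1) = u1+1 by omega, sub_self u2, abs_zero]
  norm_num [Prod.ext_iff, Prod.mk_add_mk]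

lemma crossEdge_left (u1 u2 : ℤ) :
    crossEdge (u1,u2) (u1-1,u2) = {(u1,u2), (u1,u2+1)} := by
  unfold crossEdge pmax
  have h1 : |u1 - (u1-1)| = 1 := by rw [show u1 - (u1-1) = 1 by ring]; norm_num
  dsimp only
  rw [h1, max_self, show max u1 (u1-1) = u1 by omega, sub_self u2, abs_zero]
  norm_num [Prod.ext_iff, Prod.mk_add_mk]

lemma crossEdge_up (u1 u2 : ℤ) :
    crossEdge (u1,u2) (u1,u2+1) = {(u1,u2+1), (u1+1,u2+1)} := by
  unfold crossEdge pmax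
  have h1 : |u2 - (u2+1)| = 1 := by rw [show u2 - (u2+1) = -1 by ring]; norm_num
  dsimp only
  rw [h1, max_self, show max u2 (u2+1) = u2+1 by omega, sub_self u1, abs_zero]
  norm_num [Prod.ext_iff, Prod.mk_add_mk]

lemma crossEdge_down (u1 u2 : ℤ) :
    crossEdge (u1,u2) (u1,u2-1) = {(u1,u2), (u1+1,u2)} := by
  unfold crossEdge pmax
  have h1 : |u2 - (u2-1)| = 1 := by rw [show u2 - (u2-1) = 1 by ring]; norm_num
  dsimp only
  rw [h1, max_self, show max u2 (u2-1) = u2 by omega, sub_self u1, abs_zero]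
  norm_num [Prod.ext_iff, Prod.mk_add_mk]

def bd (V₁ : Set (ℤ×ℤ)) (p q : ℤ×ℤ) : Prop := (p ∈ V₁ ∧ q ∉ V₁) ∨ (q ∈ V₁ ∧ p ∉ V₁)

lemma mem_edgeBoundary_pair {V₁ : Set (ℤ×ℤ)} {p q : ℤ×ℤ} (h : latAdj p q) :
    ({p, q} : Set (ℤ×ℤ)) ∈ edgeBoundary V₁ ↔ bd V₁ p q := by
  constructor
  · rintro ⟨x, y, hxy, _, hx, hy⟩
    rw [Set.pair_eq_pair_iff] at hxy
    rcases hxy with ⟨rfl, rfl⟩ | ⟨rfl, rfl⟩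
    · exact Or.inl ⟨hx, hy⟩
    · exact Or.inr ⟨hx, hy⟩
  · rintro (⟨hp, hq⟩ | ⟨hq, hp⟩)
    · exact ⟨p, q, rfl, h, hp, hq⟩
    · exact ⟨q, p, Set.pair_comm p q, latAdj_symm h, hq, hp⟩

lemma dualAdj_iff (V₁ : Set (ℤ×ℤ)) (u1 u2 : ℤ) (v : ℤ×ℤ) :
    dualAdj V₁ (u1,u2) v ↔
      (v = (u1+1,u2) ∧ bd V₁ (u1+1,u2) (u1+1,u2+1)) ∨
      (v = (u1-1,u2) ∧ bd V₁ (u1,u2) (u1,u2+1)) ∨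
      (v = (u1,u2+1) ∧ bd V₁ (u1,u2+1) (u1+1,u2+1)) ∨
      (v = (u1,u2-1) ∧ bd V₁ (u1,u2) (u1+1,u2)) := by
  obtain ⟨v1, v2⟩ := v
  constructor
  · rintro ⟨hadj, hcb⟩
    rw [latAdj_iff] at hadj
    dsimp only at hadj
    rcases hadj with ⟨h, h' | h'⟩ | ⟨h, h' | h'⟩
    · have hv1 : v1 = u1 := by omega
      have hv2 : v2 = u2 - 1 := by omega
      subst hv1 hv2
      rw [crossEdge_down, mem_edgeBoundary_pair (by rw [latAdj_iff]; dsimp only; omega)] at hcb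
      exact Or.inr (Or.inr (Or.inr ⟨rfl, hcb⟩))
    · have hv1 : v1 = u1 := by omega
      subst hv1 h'
      rw [crossEdge_up, mem_edgeBoundary_pair (by rw [latAdj_iff]; dsimp only; omega)] at hcb
      exact Or.inr (Or.inr (Or.inl ⟨rfl, hcb⟩))
    · have hv1 : v1 = u1 - 1 := by omega
      have hv2 : v2 = u2 := by omega
      subst hv1 hv2
      rw [crossEdge_left, mem_edgeBoundary_pair (by rw [latAdj_iff]; dsimp only; omega)] at hcb
      exact Or.inr (Or.inl ⟨rfl, hcb⟩)
    · have hv2 : v2 = u2 := by omega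
      subst hv2 h'
      rw [crossEdge_right, mem_edgeBoundary_pair (by rw [latAdj_iff]; dsimp only; omega)] at hcb
      exact Or.inl ⟨rfl, hcb⟩
  · rintro (⟨hv, hb⟩ | ⟨hv, hb⟩ | ⟨hv, hb⟩ | ⟨hv, hb⟩) <;>
      rw [Prod.mk.injEq] at hv <;> obtain ⟨hv1, hv2⟩ := hv <;> subst hv1 hv2
    · exact ⟨by rw [latAdj_iff]; dsimp only; omega,
        by rw [crossEdge_right,
          mem_edgeBoundary_pair (by rw [latAdj_iff]; dsimp only; omega)]; exact hb⟩
    · exact ⟨by rw [latAdj_iff]; dsimp only; omega,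
        by rw [crossEdge_left,
          mem_edgeBoundary_pair (by rw [latAdj_iff]; dsimp only; omega)]; exact hb⟩
    · exact ⟨by rw [latAdj_iff]; dsimp only; omega,
        by rw [crossEdge_up,
          mem_edgeBoundary_pair (by rw [latAdj_iff]; dsimp only; omega)]; exact hb⟩
    · exact ⟨by rw [latAdj_iff]; dsimp only; omega,
        by rw [crossEdge_down,
          mem_edgeBoundary_pair (by rw [latAdj_iff]; dsimp only; omega)]; exact hb⟩

lemma count_aux (V₁ : Set (ℤ×ℤ)) (u1 u2 : ℤ) (X Y : ℤ×ℤ) (hXY : X ≠ Y)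
    (hiff : ∀ v, dualAdj V₁ (u1,u2) v ↔ (v = X ∨ v = Y)) :
    Set.ncard {v | dualAdj V₁ (u1,u2) v} = 2 := by
  have hset : {v | dualAdj V₁ (u1,u2) v} = ({X, Y} : Set (ℤ×ℤ)) := Set.ext fun v => by
    rw [Set.mem_setOf_eq, hiff v]; simp
  rw [hset]
  exact Set.ncard_pair hXY

theorem dual_boundary_degree_two (V₁ : Set (ℤ × ℤ))
    (hV₁inf : V₁.Infinite) (hV₁conn : latConnected V₁)
    (hV₁cinf : V₁ᶜ.Infinite) (hV₁cconn : latConnected V₁ᶜ) :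
    ∀ u ∈ dualVertices V₁, Set.ncard {v | dualAdj V₁ u v} = 2 := by
  intro u hu
  obtain ⟨u1, u2⟩ := u
  obtain ⟨v0, hv0⟩ := hu
  by_cases hA : (u1,u2) ∈ V₁ <;>
    by_cases hb : (u1+1,u2) ∈ V₁ <;>
    by_cases hc : (u1+1,u2+1) ∈ V₁ <;>
    by_cases hd : (u1,u2+1) ∈ V₁
  · rw [dualAdj_iff] at hv0
    simp [bd, hA, hb, hc, hd] at hv0
  · exact count_aux V₁ u1 u2 (u1-1,u2) (u1,u2+1) (by intro h; rw [Prod.mk.injEq] at h; omega)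
      (fun v => by rw [dualAdj_iff]; simp [bd, hA, hb, hc, hd]; try tauto)
  · exact count_aux V₁ u1 u2 (u1+1,u2) (u1,u2+1) (by intro h; rw [Prod.mk.injEq] at h; omega)
      (fun v => by rw [dualAdj_iff]; simp [bd, hA, hb, hc, hd]; try tauto)
  · exact count_aux V₁ u1 u2 (u1+1,u2) (u1-1,u2) (by intro h; rw [Prod.mk.injEq] at h; omega)
      (fun v => by rw [dualAdj_iff]; simp [bd, hA, hb, hc, hd]; try tauto)
  · exact count_aux V₁ u1 u2 (u1+1,u2) (u1,u2-1) (by intro h; rw [Prod.mk.injEq] at h; omega)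
      (fun v => by rw [dualAdj_iff]; simp [bd, hA, hb, hc, hd]; try tauto)
  · obtain ⟨Pl, hPc, hPm, hPh, hPl⟩ := hV₁conn (u1,u2) hA (u1+1,u2+1) hc
    obtain ⟨Ql, hQc, hQm, hQh, hQl⟩ := hV₁cconn (u1+1,u2) hb (u1,u2+1) hd
    exact (no_cross_u u1 u2 Pl Ql hPc hQc hPh hPl hQh hQl
      (fun p hp q hq h => hQm q hq (h ▸ hPm p hp))).elim
  · exact count_aux V₁ u1 u2 (u1,u2+1) (u1,u2-1) (by intro h; rw [Prod.mk.injEq] at h; omega)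
      (fun v => by rw [dualAdj_iff]; simp [bd, hA, hb, hc, hd]; try tauto)
  · exact count_aux V₁ u1 u2 (u1-1,u2) (u1,u2-1) (by intro h; rw [Prod.mk.injEq] at h; omega)
      (fun v => by rw [dualAdj_iff]; simp [bd, hA, hb, hc, hd]; try tauto)
  · exact count_aux V₁ u1 u2 (u1-1,u2) (u1,u2-1) (by intro h; rw [Prod.mk.injEq] at h; omega)
      (fun v => by rw [dualAdj_iff]; simp [bd, hA, hb, hc, hd]; try tauto)
  · exact count_aux V₁ u1 u2 (u1,u2+1) (u1,u2-1) (by intro h; rw [Prod.mk.injEq] at h; omega)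
      (fun v => by rw [dualAdj_iff]; simp [bd, hA, hb, hc, hd]; try tauto)
  · obtain ⟨Pl, hPc, hPm, hPh, hPl⟩ := hV₁cconn (u1,u2) hA (u1+1,u2+1) hc
    obtain ⟨Ql, hQc, hQm, hQh, hQl⟩ := hV₁conn (u1+1,u2) hb (u1,u2+1) hd
    exact (no_cross_u u1 u2 Pl Ql hPc hQc hPh hPl hQh hQl
      (fun p hp q hq h => hPm p hp (h ▸ hQm q hq))).elim
  · exact count_aux V₁ u1 u2 (u1+1,u2) (u1,u2-1) (by intro h; rw [Prod.mk.injEq] at h; omega)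
      (fun v => by rw [dualAdj_iff]; simp [bd, hA, hb, hc, hd]; try tauto)
  · exact count_aux V₁ u1 u2 (u1+1,u2) (u1-1,u2) (by intro h; rw [Prod.mk.injEq] at h; omega)
      (fun v => by rw [dualAdj_iff]; simp [bd, hA, hb, hc, hd]; try tauto)
  · exact count_aux V₁ u1 u2 (u1+1,u2) (u1,u2+1) (by intro h; rw [Prod.mk.injEq] at h; omega)
      (fun v => by rw [dualAdj_iff]; simp [bd, hA, hb, hc, hd]; try tauto)
  · exact count_aux V₁ u1 u2 (u1-1,u2) (u1,u2+1) (by intro h; rw [Prod.mk.injEq] at h; omega)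
      (fun v => by rw [dualAdj_iff]; simp [bd, hA, hb, hc, hd]; try tauto)
  · rw [dualAdj_iff] at hv0
    simp [bd, hA, hb, hc, hd] at hv0
end

section
/- Let V₁ ⊆ ℤ² be infinite and connected with infinite connected complement, and define the dual boundary graph G* = (W*, F*) as the set of dual edges crossing the edge boundary of V₁. Then G* contains no cycle. -/
lemma latAdj_iff_s3 (u v : ℤ × ℤ) : latAdj u v ↔
    v = (u.1+1, u.2) ∨ v = (u.1-1, u.2) ∨ v = (u.1, u.2+1) ∨ v = (u.1, u.2-1) := by
  unfold latAdj
  rw [Int.abs_eq_natAbs, Int.abs_eq_natAbs, Prod.ext_iff, Prod.ext_iff, Prod.ext_iff, Prod.ext_iff]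
  omega

lemma crossEdge_comp (u v : ℤ × ℤ) : crossEdge u v =
    {(max u.1 v.1, max u.2 v.2),
     (max u.1 v.1 + (1 - |u.1 - v.1|), max u.2 v.2 + (1 - |u.2 - v.2|))} := by
  simp [crossEdge, pmax, Prod.mk_add_mk]

lemma abs_one' (a : ℤ) : |a - (a+1)| = 1 := by rw [Int.abs_eq_natAbs]; omega
lemma abs_one'' (a : ℤ) : |a - (a-1)| = 1 := by rw [Int.abs_eq_natAbs]; omega

lemma crossEdge_horiz (u v : ℤ × ℤ) (h : latAdj u v) (h2 : u.2 = v.2) :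
    crossEdge u v = {(max u.1 v.1, u.2), (max u.1 v.1, u.2 + 1)} := by
  rw [crossEdge_comp]
  rcases (latAdj_iff_s3 u v).mp h with h | h | h | h <;> subst h <;>
    simp only [abs_one', abs_one''] <;> norm_num <;> omega

lemma crossEdge_vert (u v : ℤ × ℤ) (h : latAdj u v) (h1 : u.1 = v.1) :
    crossEdge u v = {(u.1, max u.2 v.2), (u.1 + 1, max u.2 v.2)} := by
  rw [crossEdge_comp]
  rcases (latAdj_iff_s3 u v).mp h with h | h | h | h <;> subst h <;>
    simp only [abs_one', abs_one''] <;> norm_num <;> omega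

/-- signed crossing of the downward ray at `x` by the dual step `u → v`. -/
def stepW (u v x : ℤ × ℤ) : ℤ :=
  if u.2 = v.2 ∧ u.2 < x.2 ∧ (u.1 = x.1 ∨ v.1 = x.1) ∧ u.1 ≤ x.1 ∧ v.1 ≤ x.1
  then v.1 - u.1 else 0

def wind (k : ℕ) (f : ℕ → ℤ × ℤ) (x : ℤ × ℤ) : ℤ :=
  ∑ i ∈ Finset.range k, stepW (f i) (f (i+1)) x

def phi (x w : ℤ × ℤ) : ℤ := if w.1 = x.1 ∧ w.2 < x.2 then 1 else 0
def sV (u v x : ℤ × ℤ) : ℤ :=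
  if u.1 = v.1 ∧ (u.2 = x.2 ∨ v.2 = x.2) ∧ u.2 ≤ x.2 ∧ v.2 ≤ x.2 ∧ u.1 = x.1
  then v.2 - u.2 else 0

lemma latAdj_symm_s3 {u v : ℤ × ℤ} (h : latAdj u v) : latAdj v u := by
  unfold latAdj at h ⊢
  rw [Int.abs_eq_natAbs, Int.abs_eq_natAbs] at h ⊢
  omega

lemma step_vert (u v x : ℤ × ℤ) (h : latAdj u v)
    (hne : stepW u v x ≠ stepW u v (x.1, x.2+1)) :
    crossEdge u v = {x, (x.1, x.2+1)} := by
  have hk : u.2 = v.2 ∧ max u.1 v.1 = x.1 ∧ u.2 = x.2 := by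
    unfold stepW at hne
    dsimp only at hne
    split_ifs at hne <;> omega
  rw [crossEdge_horiz u v h hk.1, hk.2.1, hk.2.2]

lemma sV_ne (u v x : ℤ × ℤ) (h : latAdj u v) (hs : sV u v x ≠ 0) :
    crossEdge u v = {x, (x.1+1, x.2)} := by
  have hk : u.1 = v.1 ∧ max u.2 v.2 = x.2 ∧ u.1 = x.1 := by
    unfold sV at hs
    split_ifs at hs with h1
    · refine ⟨h1.1, by omega, h1.2.2.2.2⟩
    · omega
  rw [crossEdge_vert u v h hk.1, hk.2.1, hk.2.2]

lemma step_horiz (u v x : ℤ × ℤ) (h : latAdj u v) :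
    stepW u v x - stepW u v (x.1+1, x.2) = sV u v x + phi x v - phi x u := by
  rcases (latAdj_iff_s3 u v).mp h with h | h | h | h <;> subst h <;>
    simp only [stepW, sV, phi] <;>
    simp only [true_and, and_true, eq_self_iff_true, true_or, or_true] <;> split_ifs <;> omega

lemma wind_sub_vert (V₁ : Set (ℤ × ℤ)) (k : ℕ) (f : ℕ → ℤ × ℤ)
    (hadj : ∀ i < k, dualAdj V₁ (f i) (f (i+1))) (x : ℤ × ℤ)
    (hne : wind k f x ≠ wind k f (x.1, x.2+1)) :
    ({x, (x.1, x.2+1)} : Set (ℤ × ℤ)) ∈ edgeBoundary V₁ := by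
  have hex : ∃ i ∈ Finset.range k,
      stepW (f i) (f (i+1)) x ≠ stepW (f i) (f (i+1)) (x.1, x.2+1) := by
    by_contra hc
    push_neg at hc
    exact hne (Finset.sum_congr rfl hc)
  obtain ⟨i, hi, hs⟩ := hex
  rw [Finset.mem_range] at hi
  have h := hadj i hi
  rw [← step_vert _ _ _ h.1 hs]
  exact h.2

lemma wind_sub_horiz (V₁ : Set (ℤ × ℤ)) (k : ℕ) (f : ℕ → ℤ × ℤ)
    (hadj : ∀ i < k, dualAdj V₁ (f i) (f (i+1))) (hcl : f 0 = f k) (x : ℤ × ℤ)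
    (hne : wind k f x ≠ wind k f (x.1+1, x.2)) :
    ({x, (x.1+1, x.2)} : Set (ℤ × ℤ)) ∈ edgeBoundary V₁ := by
  have key : wind k f x - wind k f (x.1+1, x.2)
      = ∑ i ∈ Finset.range k, sV (f i) (f (i+1)) x := by
    rw [wind, wind, ← Finset.sum_sub_distrib]
    rw [Finset.sum_congr rfl (fun i hi => step_horiz (f i) (f (i+1)) x
      (hadj i (Finset.mem_range.mp hi)).1)]
    have : ∀ i ∈ Finset.range k,
        sV (f i) (f (i+1)) x + phi x (f (i+1)) - phi x (f i)
        = sV (f i) (f (i+1)) x + (phi x (f (i+1)) - phi x (f i)) := by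
      intro i _; ring
    rw [Finset.sum_congr rfl this, Finset.sum_add_distrib,
      Finset.sum_range_sub (fun i => phi x (f i)), ← hcl, sub_self, add_zero]
  have hex : ∃ i ∈ Finset.range k, sV (f i) (f (i+1)) x ≠ 0 := by
    by_contra hc
    push_neg at hc
    rw [Finset.sum_eq_zero hc] at key
    exact hne (by omega)
  obtain ⟨i, hi, hs⟩ := hex
  rw [Finset.mem_range] at hi
  have h := hadj i hi
  rw [← sV_ne _ _ _ h.1 hs]
  exact h.2

lemma wind_const_adj (V₁ : Set (ℤ × ℤ)) (k : ℕ) (f : ℕ → ℤ × ℤ)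
    (hadj : ∀ i < k, dualAdj V₁ (f i) (f (i+1))) (hcl : f 0 = f k)
    (x y : ℤ × ℤ) (hxy : latAdj x y) (hiff : x ∈ V₁ ↔ y ∈ V₁) :
    wind k f x = wind k f y := by
  have hnb : ({x, y} : Set (ℤ × ℤ)) ∉ edgeBoundary V₁ := by
    rintro ⟨x', y', heq, hadj', hx', hy'⟩
    have hx'm : x' ∈ ({x, y} : Set (ℤ × ℤ)) := by
      rw [heq]; exact Set.mem_insert _ _
    have hy'm : y' ∈ ({x, y} : Set (ℤ × ℤ)) := by
      rw [heq]; exact Set.mem_insert_iff.mpr (Or.inr rfl)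
    simp only [Set.mem_insert_iff, Set.mem_singleton_iff] at hx'm hy'm
    rcases hx'm with rfl | rfl <;> rcases hy'm with rfl | rfl <;> tauto
  rcases (latAdj_iff_s3 x y).mp hxy with h | h | h | h
  · by_contra hne
    subst h
    exact hnb (wind_sub_horiz V₁ k f hadj hcl x hne)
  · by_contra hne
    have hx : x = (y.1+1, y.2) := by subst h; rw [Prod.ext_iff]; dsimp; omega
    have hmem := wind_sub_horiz V₁ k f hadj hcl y (by rw [← hx]; exact fun hh => hne hh.symm)
    rw [← hx] at hmem
    rw [Set.pair_comm] at hnb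
    exact hnb hmem
  · by_contra hne
    subst h
    exact hnb (wind_sub_vert V₁ k f hadj x hne)
  · by_contra hne
    have hx : x = (y.1, y.2+1) := by subst h; rw [Prod.ext_iff]; dsimp; omega
    have hmem := wind_sub_vert V₁ k f hadj y (by rw [← hx]; exact fun hh => hne hh.symm)
    rw [← hx] at hmem
    rw [Set.pair_comm] at hnb
    exact hnb hmem

lemma wind_chain (g : ℤ × ℤ → ℤ) (S : Set (ℤ × ℤ))
    (hg : ∀ a b, latAdj a b → a ∈ S → b ∈ S → g a = g b) :
    ∀ l : List (ℤ × ℤ), l.Chain' latAdj → (∀ z ∈ l, z ∈ S) →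
      ∀ {x y : ℤ × ℤ}, l.head? = some x → l.getLast? = some y → g x = g y := by
  intro l
  induction l with
  | nil => intro _ _ x y hx; simp at hx
  | cons a t ih =>
    cases t with
    | nil =>
      intro _ _ x y hx hy
      simp only [List.head?_cons, Option.some.injEq] at hx
      simp only [List.getLast?_singleton, Option.some.injEq] at hy
      rw [← hx, ← hy]
    | cons b t2 =>
      intro hch hmem x y hx hy
      have hab : latAdj a b := (List.isChain_cons_cons.mp hch).1
      have h1 : g a = g b :=
        hg a b hab (hmem a (by simp)) (hmem b (by simp))
      simp only [List.head?_cons, Option.some.injEq] at hx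
      rw [List.getLast?_cons_cons] at hy
      have h2 : g b = g y := ih (List.isChain_cons_cons.mp hch).2
        (fun z hz => hmem z (List.mem_cons_of_mem a hz)) rfl hy
      rw [← hx, h1, h2]

lemma wind_low (k : ℕ) (f : ℕ → ℤ × ℤ) (x : ℤ × ℤ)
    (h : ∀ i < k, x.2 ≤ (f i).2) : wind k f x = 0 :=
  Finset.sum_eq_zero fun i hi => by
    have hb := h i (Finset.mem_range.mp hi)
    simp only [stepW]
    rw [if_neg]
    exact fun hc => absurd hc.2.1 (by omega)

def chi (x w : ℤ × ℤ) : ℤ := if x.1 ≤ w.1 then 1 else 0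

lemma wind_high (k : ℕ) (f : ℕ → ℤ × ℤ)
    (hlat : ∀ i < k, latAdj (f i) (f (i+1))) (hcl : f 0 = f k) (x : ℤ × ℤ)
    (h : ∀ i < k, (f i).2 < x.2) : wind k f x = 0 := by
  have hstep : ∀ i ∈ Finset.range k,
      stepW (f i) (f (i+1)) x = chi x (f (i+1)) - chi x (f i) := by
    intro i hi
    have hl := hlat i (Finset.mem_range.mp hi)
    have h2 := h i (Finset.mem_range.mp hi)
    rcases (latAdj_iff_s3 (f i) (f (i+1))).mp hl with hc | hc | hc | hc <;>
      rw [hc] <;> simp only [stepW, chi] <;>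
      (try simp only [true_and, and_true, eq_self_iff_true, true_or, or_true]) <;>
      split_ifs <;> omega
  rw [wind, Finset.sum_congr rfl hstep,
    Finset.sum_range_sub (fun i => chi x (f i)), ← hcl, sub_self]

lemma wind_colfree (k : ℕ) (f : ℕ → ℤ × ℤ) (hcl : f 0 = f k) (hk : 0 < k)
    (x : ℤ × ℤ) (h : ∀ i < k, (f i).1 ≠ x.1) : wind k f x = 0 :=
  Finset.sum_eq_zero fun i hi => by
    have h1 := h i (Finset.mem_range.mp hi)
    have h2 : (f (i+1)).1 ≠ x.1 := by
      by_cases hik : i + 1 = k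
      · rw [hik, ← hcl]; exact h 0 hk
      · exact h (i+1) (by have := Finset.mem_range.mp hi; omega)
    simp only [stepW]
    rw [if_neg]
    exact fun hc => by rcases hc.2.2.1 with h' | h' <;> [exact h1 h'; exact h2 h']

lemma exists_wind_zero (k : ℕ) (f : ℕ → ℤ × ℤ) (hk : 0 < k)
    (hcl : f 0 = f k) (hlat : ∀ i < k, latAdj (f i) (f (i+1)))
    (S : Set (ℤ × ℤ)) (hS : S.Infinite) : ∃ z ∈ S, wind k f z = 0 := by
  classical
  set A : Finset ℤ := (Finset.range k).image (fun i => (f i).1) with hA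
  set B : Finset ℤ := (Finset.range k).image (fun i => (f i).2) with hB
  have hBne : B.Nonempty :=
    ⟨(f 0).2, Finset.mem_image.mpr ⟨0, Finset.mem_range.mpr hk, rfl⟩⟩
  set m := B.min' hBne with hm
  set M := B.max' hBne with hM
  have hfin : Set.Finite {z : ℤ × ℤ | z.1 ∈ A ∧ m ≤ z.2 ∧ z.2 ≤ M} := by
    apply Set.Finite.subset (A.finite_toSet.prod (Set.finite_Icc m M))
    intro z hz
    exact ⟨hz.1, hz.2.1, hz.2.2⟩
  obtain ⟨z, hzS, hz⟩ := (hS.diff hfin).nonempty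
  refine ⟨z, hzS, ?_⟩
  simp only [Set.mem_setOf_eq, not_and] at hz
  by_cases h1 : z.1 ∈ A
  · have h2 := hz h1
    by_cases h3 : z.2 < m
    · exact wind_low k f z fun i hi => by
        have : (f i).2 ∈ B := Finset.mem_image.mpr ⟨i, Finset.mem_range.mpr hi, rfl⟩
        have := B.min'_le _ this
        omega
    · have h4 : M < z.2 := by
        by_contra h5
        exact h2 (by omega) (by omega)
      exact wind_high k f hlat hcl z fun i hi => by
        have : (f i).2 ∈ B := Finset.mem_image.mpr ⟨i, Finset.mem_range.mpr hi, rfl⟩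
        have := B.le_max' _ this
        omega
  · exact wind_colfree k f hcl hk z fun i hi hc => h1
      (Finset.mem_image.mpr ⟨i, Finset.mem_range.mpr hi, hc⟩)

lemma wind_ne_zero (k : ℕ) (f : ℕ → ℤ × ℤ) (hk : 3 ≤ k) (hcl : f 0 = f k)
    (hlat : ∀ i < k, latAdj (f i) (f (i+1)))
    (hinj : ∀ i j, i < k → j < k → f i = f j → i = j) :
    ∃ x : ℤ × ℤ, wind k f x ≠ 0 := by
  classical
  have hk0 : 0 < k := by omega
  -- the lowest row m, and leftmost first coordinate a on that row
  set B : Finset ℤ := (Finset.range k).image (fun i => (f i).2) with hB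
  have hBne : B.Nonempty :=
    ⟨(f 0).2, Finset.mem_image.mpr ⟨0, Finset.mem_range.mpr hk0, rfl⟩⟩
  set m := B.min' hBne with hm
  set C : Finset ℤ :=
    ((Finset.range k).filter (fun i => (f i).2 = m)).image (fun i => (f i).1) with hC
  have hCne : C.Nonempty := by
    obtain ⟨i, hiB, hi⟩ := Finset.mem_image.mp (B.min'_mem hBne)
    exact ⟨(f i).1, Finset.mem_image.mpr ⟨i, Finset.mem_filter.mpr ⟨hiB, hi⟩, rfl⟩⟩
  set a := C.min' hCne with ha
  obtain ⟨i0, hi0f, hi0a⟩ := Finset.mem_image.mp (C.min'_mem hCne)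
  have hi0k : i0 < k := Finset.mem_range.mp (Finset.mem_filter.mp hi0f).1
  have hi0m : (f i0).2 = m := by
    have := (Finset.mem_filter.mp hi0f).2
    simpa using this
  have hfi0 : f i0 = (a, m) := by
    rw [Prod.ext_iff]; exact ⟨hi0a, hi0m⟩
  have hP1 : ∀ j, j < k → m ≤ (f j).2 := fun j hj =>
    B.min'_le _ (Finset.mem_image.mpr ⟨j, Finset.mem_range.mpr hj, rfl⟩)
  have hP2 : ∀ j, j < k → (f j).2 = m → a ≤ (f j).1 := fun j hj hjm =>
    C.min'_le _ (Finset.mem_image.mpr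
      ⟨j, Finset.mem_filter.mpr ⟨Finset.mem_range.mpr hj, by simpa using hjm⟩, rfl⟩)
  -- predecessor index
  set p : ℕ := if i0 = 0 then k - 1 else i0 - 1 with hpdef
  have hpk : p < k := by rw [hpdef]; split_ifs <;> omega
  have hpp : f (p + 1) = f i0 := by
    rw [hpdef]
    split_ifs with h0
    · rw [show (k - 1) + 1 = k from by omega, ← hcl, h0]
    · rw [show (i0 - 1) + 1 = i0 from by omega]
  -- the key classification of steps crossing the ray below (a+1, m+1)
  have key : ∀ i, i < k → stepW (f i) (f (i+1)) (a+1, m+1) ≠ 0 →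
      (i = i0 ∧ f (i0+1) = (a+1, m)) ∨ (i = p ∧ f p = (a+1, m)) := by
    intro i hik hne
    have hcond : (f i).2 = (f (i+1)).2 ∧ (f i).2 < m+1 ∧
        ((f i).1 = a+1 ∨ (f (i+1)).1 = a+1) ∧ (f i).1 ≤ a+1 ∧ (f (i+1)).1 ≤ a+1 := by
      by_contra hc
      apply hne
      unfold stepW
      dsimp only
      exact if_neg hc
    have hu2 : m ≤ (f i).2 := hP1 i hik
    have hl := hlat i hik
    unfold latAdj at hl
    have habs : |(f i).1 - (f (i+1)).1| = 1 := by
      rw [hcond.1] at hl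
      simpa using hl
    rw [Int.abs_eq_natAbs] at habs
    -- f (i+1) is a path value
    have hv_mem : ∃ j, j < k ∧ f j = f (i+1) := by
      by_cases hik1 : i + 1 = k
      · exact ⟨0, hk0, by rw [hik1, hcl]⟩
      · exact ⟨i+1, by omega, rfl⟩
    obtain ⟨j, hjk, hj⟩ := hv_mem
    have hv2' : (f (i+1)).2 = m := by omega
    have hva : a ≤ (f (i+1)).1 := by
      rw [← hj]; exact hP2 j hjk (by rw [hj]; exact hv2')
    have hua : a ≤ (f i).1 := hP2 i hik (by omega)
    have hsplit : ((f i).1 = a ∧ (f (i+1)).1 = a+1) ∨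
        ((f i).1 = a+1 ∧ (f (i+1)).1 = a) := by omega
    rcases hsplit with ⟨h1, h2⟩ | ⟨h1, h2⟩
    · left
      have hu : f i = (a, m) := by rw [Prod.ext_iff]; constructor <;> omega
      have hii0 : i = i0 := hinj i i0 hik hi0k (hu.trans hfi0.symm)
      subst hii0
      exact ⟨rfl, by rw [Prod.ext_iff]; constructor <;> omega⟩
    · right
      have hv : f (i+1) = (a, m) := by rw [Prod.ext_iff]; constructor <;> omega
      by_cases hik1 : i + 1 = k
      · have h00 : f 0 = (a, m) := by rw [hcl, ← hik1]; exact hv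
        have hi00 : i0 = 0 := hinj i0 0 hi0k hk0 (hfi0.trans h00.symm)
        have hpi : p = i := by rw [hpdef, if_pos hi00]; omega
        subst hpi
        exact ⟨rfl, by rw [Prod.ext_iff]; constructor <;> omega⟩
      · have hii0 : i + 1 = i0 := hinj (i+1) i0 (by omega) hi0k (hv.trans hfi0.symm)
        have hpi : p = i := by rw [hpdef, if_neg (by omega)]; omega
        subst hpi
        exact ⟨rfl, by rw [Prod.ext_iff]; constructor <;> omega⟩
  -- the two candidate values
  have hstep1 : stepW (a, m) (a+1, m) (a+1, m+1) = 1 := by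
    unfold stepW
    dsimp only
    rw [if_pos ⟨rfl, by omega, Or.inr rfl, by omega, by omega⟩]
    omega
  have hstep2 : stepW (a+1, m) (a, m) (a+1, m+1) = -1 := by
    unfold stepW
    dsimp only
    rw [if_pos ⟨rfl, by omega, Or.inl rfl, by omega, by omega⟩]
    omega
  -- neighbors of (a,m) on the path
  have hd_lat : latAdj (a, m) (f (i0+1)) := hfi0 ▸ hlat i0 hi0k
  have he_lat : latAdj (f p) (a, m) := by
    have := hlat p hpk; rw [hpp, hfi0] at this; exact this
  have hnbr : ∀ w : ℤ × ℤ, (∃ j, j < k ∧ f j = w) → latAdj (a, m) w →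
      w = (a+1, m) ∨ w = (a, m+1) := by
    rintro w ⟨j, hjk, hjw⟩ hl
    rcases (latAdj_iff_s3 (a, m) w).mp hl with hc | hc | hc | hc
    · left; rw [hc]
    · exfalso
      have h2 : (f j).2 = m := by rw [hjw, hc]
      have := hP2 j hjk h2
      rw [hjw, hc] at this
      dsimp at this; omega
    · right; rw [hc]
    · exfalso
      have := hP1 j hjk
      rw [hjw, hc] at this
      dsimp at this; omega
  have hd_mem : ∃ j, j < k ∧ f j = f (i0+1) := by
    by_cases hik1 : i0 + 1 = k
    · exact ⟨0, hk0, by rw [hik1, hcl]⟩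
    · exact ⟨i0+1, by omega, rfl⟩
  have hd := hnbr (f (i0+1)) hd_mem hd_lat
  have he := hnbr (f p) ⟨p, hpk, rfl⟩ (latAdj_symm_s3 he_lat)
  have hde : f (i0+1) ≠ f p := by
    intro hdeq
    by_cases hik1 : i0 + 1 = k
    · have hpv : p = k - 2 := by rw [hpdef, if_neg (by omega)]; omega
      have h0p : f 0 = f p := by
        rw [hcl, ← hik1]; exact hdeq
      have := hinj 0 p hk0 hpk h0p
      omega
    · have := hinj (i0+1) p (by omega) hpk hdeq
      rw [hpdef] at this
      split_ifs at this <;> omega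
  -- pick the right index i1
  refine ⟨(a+1, m+1), ?_⟩
  rcases hd with hd | hd
  · -- step i0 is the horizontal edge
    have hval : stepW (f i0) (f (i0+1)) (a+1, m+1) = 1 := by
      rw [hfi0, hd]; exact hstep1
    have : wind k f (a+1, m+1) = stepW (f i0) (f (i0+1)) (a+1, m+1) := by
      apply Finset.sum_eq_single_of_mem i0 (Finset.mem_range.mpr hi0k)
      intro i hi hne
      by_contra hz
      rcases key i (Finset.mem_range.mp hi) hz with ⟨h1, _⟩ | ⟨h1, h2⟩
      · exact hne h1
      · exact hde (hd.trans h2.symm)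
    rw [this, hval]; omega
  · -- then step p is the horizontal edge
    have hee : f p = (a+1, m) := by
      rcases he with he | he
      · exact he
      · exact absurd (hd.trans he.symm) hde
    have hval : stepW (f p) (f (p+1)) (a+1, m+1) = -1 := by
      rw [hpp, hfi0, hee]; exact hstep2
    have : wind k f (a+1, m+1) = stepW (f p) (f (p+1)) (a+1, m+1) := by
      apply Finset.sum_eq_single_of_mem p (Finset.mem_range.mpr hpk)
      intro i hi hne
      by_contra hz
      rcases key i (Finset.mem_range.mp hi) hz with ⟨h1, h2⟩ | ⟨h1, _⟩
      · have hcontra : ((a+1 : ℤ), m) ≠ ((a : ℤ), m+1) := by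
          rw [Ne, Prod.ext_iff]; dsimp; omega
        exact absurd (h2.symm.trans hd) hcontra
      · exact hne h1
    rw [this, hval]; omega

theorem dual_boundary_no_cycle (V₁ : Set (ℤ × ℤ))
    (hV₁inf : V₁.Infinite) (hV₁conn : latConnected V₁)
    (hV₁cinf : V₁ᶜ.Infinite) (hV₁cconn : latConnected V₁ᶜ) :
    ¬ ∃ (k : ℕ) (f : ℕ → ℤ × ℤ), 3 ≤ k ∧ f 0 = f k ∧
        (∀ i < k, dualAdj V₁ (f i) (f (i + 1))) ∧
        (∀ i j, i < k → j < k → f i = f j → i = j) := by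
  rintro ⟨k, f, hk, hcl, hadj, hinj⟩
  have hlat : ∀ i < k, latAdj (f i) (f (i+1)) := fun i hi => (hadj i hi).1
  obtain ⟨x, hxne⟩ := wind_ne_zero k f hk hcl hlat hinj
  by_cases hx : x ∈ V₁
  · obtain ⟨z, hzS, hz0⟩ := exists_wind_zero k f (by omega) hcl hlat V₁ hV₁inf
    obtain ⟨l, hch, hmem, hhd, hlast⟩ := hV₁conn x hx z hzS
    have := wind_chain (wind k f) V₁
      (fun u v huv hu hv => wind_const_adj V₁ k f hadj hcl u v huv (iff_of_true hu hv))
      l hch hmem hhd hlast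
    exact hxne (this.trans hz0)
  · obtain ⟨z, hzS, hz0⟩ := exists_wind_zero k f (by omega) hcl hlat V₁ᶜ hV₁cinf
    obtain ⟨l, hch, hmem, hhd, hlast⟩ := hV₁cconn x hx z hzS
    have := wind_chain (wind k f) V₁ᶜ
      (fun u v huv hu hv => wind_const_adj V₁ k f hadj hcl u v huv (iff_of_false hu hv))
      l hch hmem hhd hlast
    exact hxne (this.trans hz0)
end

section
/- Suppose ℙ satisfies the upward finite energy property at edge e, let λ > 0 satisfy ℙ(ω_e ≥ λ) > 0, and let A be an e-increasing event with ℙ(A) > 0. Then ℙ(A ∩ {ω_e ≥ λ}) > 0. -/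
open MeasureTheory

/-! The edge modification lemma (Lemma 4.5): under the upward finite energy
property at an edge `e`, any `e`-increasing event of positive probability
intersects `{ω_e ≥ λ}` in a set of positive probability. -/

variable {ι : Type*} [Countable ι] [DecidableEq ι]

/-- The σ-algebra generated by the weights of edges other than `e`
(the information `ω̌`). -/
def checkSigma (e : ι) : MeasurableSpace (ι → ℝ) :=
  MeasurableSpace.comap (fun ω (f : {f : ι // f ≠ e}) => ω f.1) inferInstance

/-- An event `A` is `e`-increasing if raising the weight of `e` preserves
membership in `A`. -/
def EIncreasing (e : ι) (A : Set (ι → ℝ)) : Prop :=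
  ∀ ω ∈ A, ∀ r : ℝ, 0 < r → Function.update ω e (ω e + r) ∈ A

theorem edge_modification
    (ℙ : Measure (ι → ℝ)) [IsProbabilityMeasure ℙ] (e : ι)
    (hUFE : ∀ lam : ℝ, 0 < ℙ {ω | lam ≤ ω e} →
      ∀ᵐ ω ∂ℙ, 0 < (ℙ[Set.indicator {ω' | lam ≤ ω' e} (fun _ => (1 : ℝ)) | checkSigma e]) ω)
    (lam : ℝ) (hlam : 0 < lam) (hlampos : 0 < ℙ {ω | lam ≤ ω e})
    (A : Set (ι → ℝ)) (hA : MeasurableSet A) (hAinc : EIncreasing e A)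
    (hApos : 0 < ℙ A) :
    0 < ℙ (A ∩ {ω | lam ≤ ω e}) := by
  classical
  set S : Set (ι → ℝ) := {ω | lam ≤ ω e} with hSdef
  have hS : MeasurableSet S := measurableSet_le measurable_const (measurable_pi_apply e)
  -- the projection and reconstruction maps
  set proj : (ι → ℝ) → ({f : ι // f ≠ e} → ℝ) := fun ω f => ω f.1 with hprojdef
  have hproj : Measurable proj := measurable_pi_lambda _ fun f => measurable_pi_apply _
  set φ : ({f : ι // f ≠ e} → ℝ) → (ι → ℝ) :=
    fun x i => if h : i = e then lam else x ⟨i, h⟩ with hφdef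
  have hφ : Measurable φ := by
    apply measurable_pi_lambda
    intro i
    by_cases h : i = e
    · simpa [hφdef, h] using (measurable_const : Measurable fun _ : ({f : ι // f ≠ e} → ℝ) => lam)
    · simpa [hφdef, h] using measurable_pi_apply (⟨i, h⟩ : {f : ι // f ≠ e})
  have hφproj : ∀ ω : ι → ℝ, φ (proj ω) = Function.update ω e lam := by
    intro ω; funext i
    by_cases h : i = e
    · simp [hφdef, hprojdef, h, Function.update]
    · simp [hφdef, hprojdef, h, Function.update]
  set B : Set (ι → ℝ) := {ω | Function.update ω e lam ∈ A} with hBdef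
  have hBmeas : MeasurableSet[checkSigma e] B := by
    rw [checkSigma, MeasurableSpace.measurableSet_comap]
    refine ⟨φ ⁻¹' A, hφ hA, ?_⟩
    ext ω
    simp [hBdef, hφproj ω]
    exact Iff.of_eq (congrArg (· ∈ A) (hφproj ω))
  have hm : checkSigma e ≤ MeasurableSpace.pi := hproj.comap_le
  have hBmeas' : MeasurableSet B := hm _ hBmeas
  -- B ∩ S ⊆ A ∩ S
  have hBS : B ∩ S ⊆ A ∩ S := by
    rintro ω ⟨hωB, hωS⟩
    refine ⟨?_, hωS⟩
    have hle : lam ≤ ω e := hωS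
    have hωB' : Function.update ω e lam ∈ A := hωB
    rcases eq_or_lt_of_le hle with h | h
    · have : Function.update ω e lam = ω := by
        rw [h]; exact Function.update_eq_self e ω
      rwa [this] at hωB'
    · have h2 := hAinc _ hωB' (ω e - lam) (by linarith)
      have : Function.update (Function.update ω e lam) e
          (Function.update ω e lam e + (ω e - lam)) = ω := by
        funext i
        by_cases hi : i = e
        · subst hi; simp
        · simp [Function.update, hi]
      rwa [this] at h2
  by_contra hcon
  push_neg at hcon
  have hASzero : ℙ (A ∩ S) = 0 := le_antisymm hcon bot_le
  -- A \ S ⊆ B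
  have hAdB : A \ S ⊆ B := by
    rintro ω ⟨hωA, hωS⟩
    have hlt : ω e < lam := lt_of_not_ge hωS
    have h2 := hAinc _ hωA (lam - ω e) (by linarith)
    have : ω e + (lam - ω e) = lam := by ring
    rwa [this] at h2
  have hBpos : 0 < ℙ B := by
    have h1 : ℙ A ≤ ℙ (A ∩ S) + ℙ (A \ S) := le_of_eq (measure_inter_add_diff A hS).symm
    have h2 : 0 < ℙ (A \ S) := by
      by_contra h
      push_neg at h
      have : ℙ (A \ S) = 0 := le_antisymm h bot_le
      rw [hASzero, this, add_zero] at h1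
      exact absurd (le_zero_iff.mp h1) hApos.ne'
    exact h2.trans_le (measure_mono hAdB)
  have hBSzero : ℙ (B ∩ S) = 0 :=
    le_antisymm ((measure_mono hBS).trans hASzero.le) bot_le
  -- now the conditional expectation argument
  set f : (ι → ℝ) → ℝ := Set.indicator S (fun _ => (1 : ℝ)) with hfdef
  have hfint : Integrable f ℙ := (integrable_const (1 : ℝ)).indicator hS
  set g : (ι → ℝ) → ℝ := ℙ[f | checkSigma e] with hgdef
  have hgpos : ∀ᵐ ω ∂ℙ, 0 < g ω := hUFE lam hlampos
  have hint : ∫ ω in B, g ω ∂ℙ = ∫ ω in B, f ω ∂ℙ := setIntegral_condExp hm hfint hBmeas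
  have hintf : ∫ ω in B, f ω ∂ℙ = 0 := by
    rw [hfdef]
    rw [setIntegral_indicator hS]
    simp [Measure.real, hBSzero]
  have hgzero : g =ᵐ[ℙ.restrict B] 0 := by
    rw [← integral_eq_zero_iff_of_nonneg_ae]
    · rw [hint, hintf]
    · exact ae_restrict_of_ae (hgpos.mono fun ω h => h.le)
    · exact integrable_condExp.integrableOn
  have : ∀ᵐ ω ∂ℙ.restrict B, False := by
    filter_upwards [hgzero, ae_restrict_of_ae hgpos] with ω h1 h2
    rw [h1] at h2
    exact lt_irrefl 0 h2
  have : ℙ.restrict B Set.univ = 0 := by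
    simpa using this
  rw [Measure.restrict_apply_univ] at this
  exact absurd this hBpos.ne'
end

section
/- Let d : ℤ → ℤ be a (random) monotone nondecreasing function such that d(n) − n has the same distribution as d(0) for all n. Fix ε > 0, k ≥ 1 and let p = ℙ(|gap event|) where the gap event forces d(jd₀) − d((j−1)d₀) ≥ εk along an ergodic sequence of shifts of period d₀. Then p ≤ d₀/(εk). In particular, the probability that two coalescing-ordered exit points on the line L_k at horizontal positions d_k(0) and d_k(v) differ by at least εk tends to 0 as k → ∞. -/
open MeasureTheory
open scoped ENNReal

/-! Angular concentration of geodesic exit points (abstract form of Lemma 4.7):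
a random monotone function `d : ℤ → ℤ` with stationary increments, equivariant
under an ergodic shift of period `d₀`, has gaps of size `≥ εk` with probability
at most `d₀/(εk)`. -/

private lemma sum_Ioc_split (G : ℤ → ℝ≥0∞) {a b c : ℤ} (h1 : a ≤ b) (h2 : b ≤ c) :
    ∑ t ∈ Finset.Ioc a c, G t = (∑ t ∈ Finset.Ioc a b, G t) + ∑ t ∈ Finset.Ioc b c, G t := by
  rw [← Finset.Ioc_union_Ioc_eq_Ioc h1 h2, Finset.sum_union]
  exact Finset.disjoint_left.2 fun x hx h'x =>
    absurd (Finset.mem_Ioc.1 h'x).1 (not_lt.2 (Finset.mem_Ioc.1 hx).2)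

theorem gap_probability_bound
    {Ω : Type*} [MeasurableSpace Ω] (ℙ : Measure Ω) [IsProbabilityMeasure ℙ]
    (T : Ω → Ω) (herg : Ergodic T ℙ)
    (d : Ω → ℤ → ℤ)
    (hmono : ∀ ω, Monotone (d ω))
    (hmeas : ∀ n : ℤ, Measurable fun ω => d ω n)
    (d₀ : ℕ) (hd₀ : 0 < d₀)
    (hequiv : ∀ ω (m : ℤ), d (T ω) m = d ω (m + d₀) - d₀)
    (hstat : ∀ n : ℤ, ℙ.map (fun ω => d ω n - n) = ℙ.map (fun ω => d ω 0))
    (ε : ℝ) (hε : 0 < ε) (k : ℕ) (hk : 1 ≤ k) :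
    (ℙ {ω | ε * k ≤ ((d ω d₀ - d ω 0 : ℤ) : ℝ)}).toReal ≤ d₀ / (ε * k) := by
  classical
  set f : Ω → ℤ := fun ω => d ω 0 with hf
  set h : Ω → ℤ := fun ω => d ω d₀ with hh
  have hεk : (0:ℝ) < ε * k := by
    have : (1:ℝ) ≤ (k:ℝ) := by exact_mod_cast hk
    nlinarith
  set c : ℤ := ⌈ε * k⌉ with hc_def
  have hc_pos : 0 < c := Int.ceil_pos.mpr hεk
  have hc_ge : ε * k ≤ (c:ℝ) := Int.le_ceil _
  -- rewrite the event using the integer ceiling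
  have hA : {ω | ε * k ≤ ((d ω d₀ - d ω 0 : ℤ) : ℝ)} = {ω | c ≤ h ω - f ω} := by
    ext ω
    simp only [Set.mem_setOf_eq, hc_def, Int.ceil_le, hf, hh]
  set A : Set Ω := {ω | c ≤ h ω - f ω} with hA_def
  rw [hA]
  -- measurability facts
  have hfm : Measurable f := hmeas 0
  have hhm : Measurable h := hmeas d₀
  have hAm : MeasurableSet A := by
    have hm : Measurable fun ω => h ω - f ω := hhm.sub hfm
    exact hm (MeasurableSet.of_discrete (s := {x : ℤ | c ≤ x}))
  have hfh : ∀ ω, f ω ≤ h ω := fun ω => hmono ω (by positivity)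
  -- the gap events
  set E : ℤ → Set Ω := fun t => {ω | f ω ≤ t ∧ t < h ω} with hE_def
  have hEm : ∀ t, MeasurableSet (E t) := by
    intro t
    exact (hfm (MeasurableSet.of_discrete (s := {x : ℤ | x ≤ t}))).inter
      (hhm (MeasurableSet.of_discrete (s := {x : ℤ | t < x})))
  -- stationarity: ℙ {h ≤ t} = ℙ {f ≤ t - d₀}
  have hstat' : ∀ t : ℤ, ℙ {ω | h ω ≤ t} = ℙ {ω | f ω ≤ t - d₀} := by
    intro t
    have hm1 : Measurable fun ω => d ω (d₀:ℤ) - (d₀:ℤ) := (hmeas _).sub measurable_const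
    have := hstat (d₀:ℤ)
    have h1 : ℙ.map (fun ω => d ω (d₀:ℤ) - (d₀:ℤ)) {x : ℤ | x ≤ t - d₀}
        = ℙ.map f {x : ℤ | x ≤ t - d₀} := by rw [this]
    rw [Measure.map_apply hm1 (MeasurableSet.of_discrete),
        Measure.map_apply hfm (MeasurableSet.of_discrete)] at h1
    have h2 : (fun ω => d ω (d₀:ℤ) - (d₀:ℤ)) ⁻¹' {x : ℤ | x ≤ t - d₀}
        = {ω | h ω ≤ t} := by
      ext ω; simp only [Set.mem_preimage, Set.mem_setOf_eq, hh]; omega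
    rw [h2] at h1
    exact h1
  -- decomposition ℙ {f ≤ t} = ℙ {h ≤ t} + ℙ (E t)
  have hdecomp : ∀ t : ℤ, ℙ {ω | f ω ≤ t} = ℙ {ω | f ω ≤ t - d₀} + ℙ (E t) := by
    intro t
    have hsub : {ω | h ω ≤ t} ⊆ {ω | f ω ≤ t} := fun ω hω => le_trans (hfh ω) hω
    have hunion : {ω | f ω ≤ t} = {ω | h ω ≤ t} ∪ E t := by
      ext ω; simp only [Set.mem_union, Set.mem_setOf_eq, hE_def]
      constructor
      · intro hft; rcases le_or_gt (h ω) t with h1 | h1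
        · exact Or.inl h1
        · exact Or.inr ⟨hft, h1⟩
      · rintro (h1 | h1)
        · exact le_trans (hfh ω) h1
        · exact h1.1
    have hdisj : Disjoint {ω | h ω ≤ t} (E t) := by
      rw [Set.disjoint_left]; rintro ω h1 ⟨_, h2⟩
      exact absurd h1 (not_le.mpr h2)
    rw [hunion, measure_union hdisj (hEm t), hstat' t]
  -- telescoping bound : sum of ℙ (E t) over a window is at most d₀
  have key : ∀ a b : ℤ, a ≤ b - d₀ →
      (∑ t ∈ Finset.Ioc a b, ℙ (E t)) ≤ (d₀ : ℝ≥0∞) := by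
    intro a b hab
    set G : ℤ → ℝ≥0∞ := fun t => ℙ {ω | f ω ≤ t} with hG
    have hGle : ∀ t, G t ≤ 1 := fun t => prob_le_one
    have hsum : (∑ t ∈ Finset.Ioc a b, ℙ (E t)) + ∑ t ∈ Finset.Ioc a b, G (t - d₀)
        = ∑ t ∈ Finset.Ioc a b, G t := by
      rw [← Finset.sum_add_distrib]
      refine Finset.sum_congr rfl fun t _ => ?_
      rw [add_comm]; exact (hdecomp t).symm
    -- reindex the shifted sum
    have hre : (∑ t ∈ Finset.Ioc a b, G (t - d₀))
        = ∑ t ∈ Finset.Ioc (a - d₀) (b - d₀), G t := by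
      have himg : Finset.Ioc (a - (d₀:ℤ)) (b - d₀) = (Finset.Ioc a b).image (· + (-(d₀:ℤ))) := by
        rw [Finset.image_add_right_Ioc]; congr 1 <;> ring
      rw [himg, Finset.sum_image (by intro x _ y _ hxy; simp only at hxy; omega)]
      exact Finset.sum_congr rfl fun t _ => by rw [Int.sub_eq_add_neg]
    -- split both sums at b - d₀ and a respectively
    have hsplit1 : (∑ t ∈ Finset.Ioc a b, G t)
        = (∑ t ∈ Finset.Ioc a (b - d₀), G t) + ∑ t ∈ Finset.Ioc (b - d₀) b, G t := by
      exact sum_Ioc_split G hab (by omega)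
    have hsplit2 : (∑ t ∈ Finset.Ioc (a - d₀) (b - d₀), G t)
        = (∑ t ∈ Finset.Ioc (a - d₀) a, G t) + ∑ t ∈ Finset.Ioc a (b - d₀), G t := by
      exact sum_Ioc_split G (by omega) hab
    have htail : (∑ t ∈ Finset.Ioc (b - d₀) b, G t) ≤ (d₀ : ℝ≥0∞) := by
      calc (∑ t ∈ Finset.Ioc (b - d₀) b, G t) ≤ ∑ t ∈ Finset.Ioc (b - d₀) b, 1 :=
            Finset.sum_le_sum fun t _ => hGle t
        _ = ((Finset.Ioc (b - (d₀:ℤ)) b).card : ℝ≥0∞) := by simp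
        _ = (d₀ : ℝ≥0∞) := by rw [Int.card_Ioc]; congr 1; omega
    have hmid_ne : (∑ t ∈ Finset.Ioc a (b - d₀), G t) ≠ ⊤ := by
      refine ne_top_of_le_ne_top ?_ (Finset.sum_le_sum fun t _ => hGle t)
      simp
    -- conclude
    have : (∑ t ∈ Finset.Ioc a b, ℙ (E t)) + ∑ t ∈ Finset.Ioc a b, G (t - d₀)
        ≤ (d₀ : ℝ≥0∞) + ∑ t ∈ Finset.Ioc a b, G (t - d₀) := by
      rw [hsum, hre, hsplit1, hsplit2]
      calc (∑ t ∈ Finset.Ioc a (b - d₀), G t) + ∑ t ∈ Finset.Ioc (b - d₀) b, G t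
          ≤ (∑ t ∈ Finset.Ioc a (b - d₀), G t) + (d₀:ℝ≥0∞) := add_le_add_right htail _
        _ = (d₀:ℝ≥0∞) + ∑ t ∈ Finset.Ioc a (b - d₀), G t := add_comm _ _
        _ ≤ (d₀:ℝ≥0∞) + ((∑ t ∈ Finset.Ioc (a - d₀) a, G t) +
              ∑ t ∈ Finset.Ioc a (b - d₀), G t) := add_le_add_right le_add_self _
    have hfin : (∑ t ∈ Finset.Ioc a b, G (t - d₀)) ≠ ⊤ := by
      rw [hre]
      refine ne_top_of_le_ne_top ?_ (Finset.sum_le_sum fun t _ => hGle t)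
      simp
    exact ENNReal.le_of_add_le_add_right hfin this
  -- counting bound: c * ℙ (A ∩ B N) ≤ ∑ ℙ (E t)
  set B : ℕ → Set Ω := fun N => {ω | -(N:ℤ) ≤ f ω ∧ h ω ≤ N} with hB_def
  have hBm : ∀ N, MeasurableSet (B N) := by
    intro N
    exact (hfm (MeasurableSet.of_discrete (s := {x : ℤ | -(N:ℤ) ≤ x}))).inter
      (hhm (MeasurableSet.of_discrete (s := {x : ℤ | x ≤ (N:ℤ)})))
  have hcount : ∀ N : ℕ, (d₀:ℤ) ≤ N →
      (c.toNat : ℝ≥0∞) * ℙ (A ∩ B N) ≤ (d₀ : ℝ≥0∞) := by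
    intro N hN
    set a : ℤ := -(N:ℤ) - 1 with ha_def
    set b : ℤ := (N:ℤ) + c with hb_def
    have hab : a ≤ b - d₀ := by omega
    refine le_trans ?_ (key a b hab)
    -- lower-bound the sum by a lintegral computation
    have hS : MeasurableSet (A ∩ B N) := hAm.inter (hBm N)
    have step1 : (∑ t ∈ Finset.Ioc a b, ℙ (E t))
        = ∫⁻ ω, (∑ t ∈ Finset.Ioc a b, (E t).indicator (fun _ => (1:ℝ≥0∞)) ω) ∂ℙ := by
      rw [lintegral_finset_sum _ (fun t _ => measurable_const.indicator (hEm t))]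
      refine Finset.sum_congr rfl fun t _ => ?_
      rw [lintegral_indicator_const (hEm t), one_mul]
    have step2 : (c.toNat : ℝ≥0∞) * ℙ (A ∩ B N)
        = ∫⁻ ω, (A ∩ B N).indicator (fun _ => (c.toNat : ℝ≥0∞)) ω ∂ℙ := by
      rw [lintegral_indicator_const hS]
    rw [step1, step2]
    refine lintegral_mono fun ω => ?_
    rcases Classical.em (ω ∈ A ∩ B N) with hω | hω
    · rw [Set.indicator_of_mem hω]
      obtain ⟨hωA, hωB⟩ := hω
      have hgap : c ≤ h ω - f ω := hωA
      have hcard : Finset.Ico (f ω) (f ω + c)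
          ⊆ (Finset.Ioc a b).filter (fun t => ω ∈ E t) := by
        intro t ht
        rw [Finset.mem_Ico] at ht
        rw [Finset.mem_filter, Finset.mem_Ioc]
        have hωB1 : -(N:ℤ) ≤ f ω := hωB.1
        have hωB2 : h ω ≤ N := hωB.2
        have hfh' := hfh ω
        refine ⟨⟨by omega, by omega⟩, ?_, ?_⟩
        · exact ht.1
        · omega
      calc (c.toNat : ℝ≥0∞) = ((Finset.Ico (f ω) (f ω + c)).card : ℝ≥0∞) := by
            rw [Int.card_Ico]; congr 1; omega
        _ ≤ (((Finset.Ioc a b).filter (fun t => ω ∈ E t)).card : ℝ≥0∞) := by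
            exact_mod_cast Nat.cast_le.mpr (Finset.card_le_card hcard)
        _ = ∑ t ∈ Finset.Ioc a b, (E t).indicator (fun _ => (1:ℝ≥0∞)) ω := by
            rw [Finset.card_filter]
            push_cast
            refine Finset.sum_congr rfl fun t _ => ?_
            by_cases hmem : ω ∈ E t <;> simp [hmem]
    · rw [Set.indicator_of_notMem hω]
      exact zero_le
  -- pass to the limit N → ∞
  have hmonoB : Monotone fun N => A ∩ B N := by
    intro m n hmn ω ⟨h1, h2⟩
    refine ⟨h1, ?_, ?_⟩
    · have := h2.1; have : -(n:ℤ) ≤ -(m:ℤ) := by exact_mod_cast neg_le_neg (Int.ofNat_le.mpr hmn)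
      omega
    · have := h2.2; have h3 : (m:ℤ) ≤ (n:ℤ) := by exact_mod_cast hmn
      omega
  have hunionB : (⋃ N, A ∩ B N) = A := by
    ext ω
    simp only [Set.mem_iUnion, Set.mem_inter_iff]
    constructor
    · rintro ⟨N, hN, _⟩; exact hN
    · intro hω
      refine ⟨((f ω).natAbs + (h ω).natAbs), hω, ?_, ?_⟩ <;> omega
  have htend : Filter.Tendsto (fun N => ℙ (A ∩ B N)) Filter.atTop (nhds (ℙ A)) := by
    have := tendsto_measure_iUnion_atTop (μ := ℙ) hmonoB
    rwa [hunionB] at this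
  have hlim : (c.toNat : ℝ≥0∞) * ℙ A ≤ (d₀ : ℝ≥0∞) := by
    have htend2 : Filter.Tendsto (fun N => (c.toNat:ℝ≥0∞) * ℙ (A ∩ B N)) Filter.atTop
        (nhds ((c.toNat:ℝ≥0∞) * ℙ A)) :=
      ENNReal.Tendsto.const_mul htend (Or.inr (by simp))
    refine le_of_tendsto htend2 ?_
    filter_upwards [Filter.eventually_ge_atTop d₀] with N hN
    exact hcount N (by exact_mod_cast hN)
  have hreal : (c.toNat : ℝ) * (ℙ A).toReal ≤ (d₀ : ℝ) := by
    have h2 := ENNReal.toReal_mono (by simp) hlim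
    rwa [ENNReal.toReal_mul, ENNReal.toReal_natCast, ENNReal.toReal_natCast] at h2
  have hc_real : (c.toNat : ℝ) = (c:ℝ) := by exact_mod_cast Int.toNat_of_nonneg hc_pos.le
  rw [hc_real] at hreal
  have hPA_nonneg : (0:ℝ) ≤ (ℙ A).toReal := ENNReal.toReal_nonneg
  rw [le_div_iff₀ hεk]
  nlinarith [mul_le_mul_of_nonneg_left hc_ge hPA_nonneg]
end
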